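/- For all integers n ≥ 1 and k with 0 ≤ k ≤ ⌊(n−1)/2⌋, the perfect matching M_0 = {u_iv_i : i = 1,…,n} of the graph H_k satisfies f(H_k, M_0) = n − 1; consequently F(H_k) = n − 1. In particular, for k = ⌊(n−1)/2⌋ one has f(H_k) = ⌊n/2⌋, so the lower bound f(G) ≥ ⌊n/2⌋ for graphs G ∈ 𝒢_{2n} with F(G) = n−1 is attained. -/

import Mathlib

open SimpleGraph

/-- `M` is a perfect matching of the simple graph `G`, viewed as a set of edges:
the edges of `M` are pairwise disjoint edges of `G` covering every vertex. -/
def IsPM {V : Type*} (G : SimpleGraph V) (M : Set (Sym2 V)) : Prop :=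
  M ⊆ G.edgeSet ∧
  (∀ e ∈ M, ∀ f ∈ M, e ≠ f → ∀ v : V, v ∈ e → v ∉ f) ∧
  (∀ v : V, ∃ e ∈ M, v ∈ e)

/-- `S` is a forcing set of the perfect matching `M` of `G`:
`S ⊆ M` and `M` is the unique perfect matching of `G` containing `S`. -/
def IsForcingSet {V : Type*} (G : SimpleGraph V) (M S : Set (Sym2 V)) : Prop :=
  S ⊆ M ∧ ∀ M', IsPM G M' → S ⊆ M' → M' = M

/-- The forcing number `f(G,M)`: smallest cardinality of a forcing set of `M`. -/
noncomputable def forcingNum {V : Type*} (G : SimpleGraph V) (M : Set (Sym2 V)) : ℕ :=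
  sInf {k | ∃ S, IsForcingSet G M S ∧ S.ncard = k}

/-- The minimum forcing number `f(G)`. -/
noncomputable def minForcing {V : Type*} (G : SimpleGraph V) : ℕ :=
  sInf {k | ∃ M, IsPM G M ∧ forcingNum G M = k}

/-- The maximum forcing number `F(G)`. -/
noncomputable def maxForcing {V : Type*} (G : SimpleGraph V) : ℕ :=
  sSup {k | ∃ M, IsPM G M ∧ forcingNum G M = k}

/-- Vertex connectivity `κ(G)`: least size of a set of vertices whose deletion
disconnects the graph or leaves at most one vertex. -/
noncomputable def vertexConn {V : Type*} (G : SimpleGraph V) : ℕ :=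
  sInf {k | ∃ X : Set V, X.ncard = k ∧ (¬ (G.induce Xᶜ).Connected ∨ Xᶜ.ncard ≤ 1)}

/-- Edge connectivity `λ(G)`: least size of a set of edges whose deletion
disconnects the graph. -/
noncomputable def edgeConn {V : Type*} (G : SimpleGraph V) : ℕ :=
  sInf {k | ∃ F : Set (Sym2 V), F ⊆ G.edgeSet ∧ F.ncard = k ∧ ¬ (G.deleteEdges F).Connected}

/-- `G` is `l`-extendable: `G` is connected, has at least `2l+2` vertices, has a
perfect matching, and every matching of size `l` extends to a perfect matching. -/
def IsExtendable {V : Type*} [Fintype V] (G : SimpleGraph V) (l : ℕ) : Prop :=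
  G.Connected ∧ 2 * l + 2 ≤ Fintype.card V ∧ (∃ M, IsPM G M) ∧
    ∀ N : Set (Sym2 V), N ⊆ G.edgeSet →
      (∀ e ∈ N, ∀ f ∈ N, e ≠ f → ∀ v : V, v ∈ e → v ∉ f) → N.ncard = l →
      ∃ M, IsPM G M ∧ N ⊆ M

/-- `G` is factor-critical: deleting any vertex leaves a graph with a perfect matching. -/
def IsFactorCritical {V : Type*} (G : SimpleGraph V) : Prop :=
  ∀ v : V, ∃ M, IsPM (G.induce {v}ᶜ) M

/-- `o(G)`: the number of connected components of odd order. -/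
noncomputable def oddComponents {V : Type*} (G : SimpleGraph V) : ℕ :=
  {c : G.ConnectedComponent | Odd c.supp.ncard}.ncard

/-- `G` belongs to `𝒦_{n,n}⁺`: it is obtained from `K_{n,n}` by adding edges inside one
partite set; equivalently there is an independent set `A` of size `n` all of whose
vertices are adjacent to all vertices outside `A`. -/
def InKnnPlus {V : Type*} (n : ℕ) (G : SimpleGraph V) : Prop :=
  ∃ A : Set V, A.ncard = n ∧ (∀ a ∈ A, ∀ b ∈ A, ¬ G.Adj a b) ∧
    ∀ a ∈ A, ∀ b ∉ A, G.Adj a b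

/-- `M` is a perfect matching of the subgraph of `G` induced by the vertex set `T`. -/
def IsPMOn {V : Type*} (G : SimpleGraph V) (T : Set V) (M : Set (Sym2 V)) : Prop :=
  M ⊆ G.edgeSet ∧ (∀ e ∈ M, ∀ w : V, w ∈ e → w ∈ T) ∧
  (∀ e ∈ M, ∀ f ∈ M, e ≠ f → ∀ v : V, v ∈ e → v ∉ f) ∧
  (∀ w ∈ T, ∃ e ∈ M, w ∈ e)

/-- The forcing number of the perfect matching `M` of the subgraph of `G`
induced by the vertex set `T`. -/
noncomputable def forcingNumOn {V : Type*} (G : SimpleGraph V) (T : Set V)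
    (M : Set (Sym2 V)) : ℕ :=
  sInf {k | ∃ S, S ⊆ M ∧ (∀ M', IsPMOn G T M' → S ⊆ M' → M' = M) ∧ S.ncard = k}

/-- `{i,j}` is one of the `k` special pairs `{2t, 2t+1}` (0-indexed), `t < k`. -/
def pairIdx (k : ℕ) {n : ℕ} (i j : Fin n) : Prop :=
  ∃ t, t < k ∧ ((i.val = 2 * t ∧ j.val = 2 * t + 1) ∨ (j.val = 2 * t ∧ i.val = 2 * t + 1))

/-- The graph `H_k` on vertices `u_0,…,u_{n-1}` (left copy) and `v_0,…,v_{n-1}`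
(right copy): edges `u_i v_i` for all `i`; `u_{2t} u_{2t+1}` and `v_{2t} v_{2t+1}`
for `t < k`; and `u_i v_j`, `u_j v_i` for every pair `i ≠ j` that is not one of the
`k` special pairs. -/
def Hgraph (n k : ℕ) : SimpleGraph (Fin n ⊕ Fin n) :=
  SimpleGraph.fromRel (fun x y =>
    match x, y with
    | Sum.inl i, Sum.inr j => i = j ∨ ¬ pairIdx k i j
    | Sum.inl i, Sum.inl j => pairIdx k i j
    | Sum.inr i, Sum.inr j => pairIdx k i j
    | Sum.inr _, Sum.inl _ => False)

/-- The perfect matching `M₀ = {u_i v_i : i}` of `H_k`. -/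
def M0 (n : ℕ) : Set (Sym2 (Fin n ⊕ Fin n)) :=
  {e | ∃ i : Fin n, e = s(Sum.inl i, Sum.inr i)}


section AUX
section Helpers
variable {V : Type*} {G : SimpleGraph V} {M M' S : Set (Sym2 V)}

lemma pm_unique (hM : IsPM G M) {e f : Sym2 V} {z : V} (he : e ∈ M) (hf : f ∈ M)
    (hz : z ∈ e) (hz' : z ∈ f) : e = f := by
  by_contra h
  exact hM.2.1 e he f hf h z hz hz'

lemma pm_superset_eq (hM' : IsPM G M') (hM : IsPM G M) (h : M ⊆ M') : M' = M := by
  apply Set.Subset.antisymm _ h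
  intro e he
  induction e using Sym2.ind with
  | _ x y =>
    obtain ⟨g, hg, hxg⟩ := hM.2.2 x
    rwa [pm_unique hM' he (h hg) (by simp) hxg]

lemma pm_self_forcing (hM : IsPM G M) : IsForcingSet G M M :=
  ⟨le_refl _, fun M' hM' hsub => pm_superset_eq hM' hM hsub⟩

lemma drop_forcing (hM : IsPM G M) {e : Sym2 V} (he : e ∈ M) :
    IsForcingSet G M (M \ {e}) := by
  refine ⟨Set.diff_subset, fun M' hM' hsub => ?_⟩
  apply pm_superset_eq hM' hM
  intro f hf
  by_cases hfe : f = e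
  · subst hfe
    obtain ⟨a, b, rfl⟩ : ∃ a b, f = s(a,b) := by
      induction f using Sym2.ind with | _ x y => exact ⟨x, y, rfl⟩
    have hab : a ≠ b := (hM.1 hf).ne
    -- partner of a in M' must be b
    obtain ⟨g, hg, hag⟩ := hM'.2.2 a
    obtain ⟨x, hx⟩ := Sym2.mem_iff_exists.mp hag
    subst hx
    have hxa : x ≠ a := fun h => by simp [h] at hg; exact (hM'.1 hg).ne rfl
    -- x is covered in M by some edge
    obtain ⟨h2, hh2, hxh2⟩ := hM.2.2 x
    by_cases hh2e : h2 = s(a,b)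
    · subst hh2e
      have : x = a ∨ x = b := Sym2.mem_iff.mp hxh2
      have hxb : x = b := this.resolve_left hxa
      subst hxb
      exact hg
    · -- h2 ∈ M \ {e} ⊆ M', conflicts with g at x
      have hh2' : h2 ∈ M' := hsub ⟨hh2, hh2e⟩
      have heq : s(a,x) = h2 := pm_unique hM' hg hh2' (Sym2.mem_mk_right a x) hxh2
      have : h2 = s(a,b) := pm_unique hM (heq ▸ hh2) hf (heq ▸ Sym2.mem_mk_left a x) (Sym2.mem_mk_left a b)
      exact absurd this hh2e
  · exact hsub ⟨hf, hfe⟩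
end Helpers

section Helpers2
variable {V : Type*} {G : SimpleGraph V} {M M' S : Set (Sym2 V)}

lemma pm_ncard [Fintype V] (hM : IsPM G M) : Fintype.card V = 2 * M.ncard := by
  classical
  choose F hF1 hF2 using hM.2.2
  have himg : M = ↑(Finset.univ.image F) := by
    ext e
    simp only [Finset.coe_image, Finset.coe_univ, Set.image_univ, Set.mem_range]
    constructor
    · intro he
      induction e using Sym2.ind with
      | _ x y =>
        exact ⟨x, pm_unique hM (hF1 x) he (hF2 x) (Sym2.mem_mk_left x y)⟩
    · rintro ⟨v, rfl⟩; exact hF1 v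
  have hfib : ∀ e ∈ Finset.univ.image F, (Finset.univ.filter (fun v => F v = e)).card = 2 := by
    intro e he
    have heM : e ∈ M := by rw [himg]; exact_mod_cast he
    obtain ⟨x, y, rfl⟩ : ∃ x y, e = s(x,y) := by
      induction e using Sym2.ind with | _ x y => exact ⟨x, y, rfl⟩
    have hxy : x ≠ y := (hM.1 heM).ne
    have : (Finset.univ.filter (fun v => F v = s(x,y))) = {x, y} := by
      ext v
      simp only [Finset.mem_filter, Finset.mem_univ, true_and, Finset.mem_insert,
        Finset.mem_singleton]
      constructor
      · intro hv
        have := hF2 v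
        rw [hv] at this
        exact Sym2.mem_iff.mp this
      · rintro (rfl | rfl)
        · exact pm_unique hM (hF1 v) heM (hF2 v) (Sym2.mem_mk_left v y)
        · exact pm_unique hM (hF1 v) heM (hF2 v) (Sym2.mem_mk_right x v)
    rw [this, Finset.card_insert_of_notMem (by simpa using hxy), Finset.card_singleton]
  have := Finset.card_eq_sum_card_image F (Finset.univ : Finset V)
  rw [Finset.sum_congr rfl hfib, Finset.sum_const, smul_eq_mul] at this
  rw [himg, Set.ncard_coe_finset]
  rw [← Finset.card_univ, this, mul_comm]

lemma pm_swap (hM : IsPM G M) {a b c d : V}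
    (he : s(a,b) ∈ M) (hf : s(c,d) ∈ M) (hef : s(a,b) ≠ s(c,d))
    (had : G.Adj a d) (hcb : G.Adj c b) :
    ∃ M', IsPM G M' ∧ M \ {s(a,b), s(c,d)} ⊆ M' ∧ M' ≠ M := by
  have hab : a ≠ b := (hM.1 he).ne
  have hcd : c ≠ d := (hM.1 hf).ne
  have hac : a ≠ c := fun h => hM.2.1 _ he _ hf hef a (by simp) (by simp [h])
  have had' : a ≠ d := fun h => hM.2.1 _ he _ hf hef a (by simp) (by simp [h])
  have hbc : b ≠ c := fun h => hM.2.1 _ he _ hf hef b (by simp) (by simp [h])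
  have hbd : b ≠ d := fun h => hM.2.1 _ he _ hf hef b (by simp) (by simp [h])
  refine ⟨(M \ {s(a,b), s(c,d)}) ∪ {s(a,d), s(c,b)}, ⟨?_, ?_, ?_⟩, ?_, ?_⟩
  · rintro g (⟨hg, -⟩ | hg)
    · exact hM.1 hg
    · rcases hg with rfl | rfl
      · exact had
      · exact hcb
  · -- pairwise disjoint
    have hdisj : ∀ g ∈ M, g ≠ s(a,b) → g ≠ s(c,d) → ∀ v : V, v ∈ g → v ∉ ({a,b,c,d} : Set V) := by
      intro g hg hg1 hg2 v hv hv'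
      rcases hv' with rfl | rfl | rfl | rfl
      · exact hM.2.1 g hg _ he hg1 v hv (by simp)
      · exact hM.2.1 g hg _ he hg1 v hv (by simp)
      · exact hM.2.1 g hg _ hf hg2 v hv (by simp)
      · exact hM.2.1 g hg _ hf hg2 v hv (by simp)
    rintro g (⟨hg, hgn⟩ | hg) g' (⟨hg', hgn'⟩ | hg') hne v hvg hvg'
    · exact hM.2.1 g hg g' hg' hne v hvg hvg'
    · simp only [Set.mem_insert_iff, Set.mem_singleton_iff, not_or] at hgn
      rcases hg' with rfl | rfl <;>
      · rcases Sym2.mem_iff.mp hvg' with rfl | rfl <;>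
          exact hdisj g hg hgn.1 hgn.2 v hvg (by simp)
    · simp only [Set.mem_insert_iff, Set.mem_singleton_iff, not_or] at hgn'
      rcases hg with rfl | rfl <;>
      · rcases Sym2.mem_iff.mp hvg with rfl | rfl <;>
          exact hdisj g' hg' hgn'.1 hgn'.2 v hvg' (by simp)
    · rcases hg with rfl | rfl <;> rcases hg' with rfl | rfl
      · exact absurd rfl hne
      · rcases Sym2.mem_iff.mp hvg with rfl | rfl <;> rcases Sym2.mem_iff.mp hvg' with rfl | rfl <;>
          simp_all
      · rcases Sym2.mem_iff.mp hvg with rfl | rfl <;> rcases Sym2.mem_iff.mp hvg' with rfl | rfl <;>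
          simp_all
      · exact absurd rfl hne
  · -- cover
    have m1 : s(a,d) ∈ (M \ {s(a,b), s(c,d)}) ∪ {s(a,d), s(c,b)} := Or.inr (Or.inl rfl)
    have m2 : s(c,b) ∈ (M \ {s(a,b), s(c,d)}) ∪ {s(a,d), s(c,b)} := Or.inr (Or.inr rfl)
    intro v
    obtain ⟨g, hg, hvg⟩ := hM.2.2 v
    by_cases hg1 : g = s(a,b)
    · rw [hg1] at hvg
      rcases Sym2.mem_iff.mp hvg with h | h
      · exact ⟨s(a,d), m1, h ▸ Sym2.mem_mk_left a d⟩
      · exact ⟨s(c,b), m2, h ▸ Sym2.mem_mk_right c b⟩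
    by_cases hg2 : g = s(c,d)
    · rw [hg2] at hvg
      rcases Sym2.mem_iff.mp hvg with h | h
      · exact ⟨s(c,b), m2, h ▸ Sym2.mem_mk_left c b⟩
      · exact ⟨s(a,d), m1, h ▸ Sym2.mem_mk_right a d⟩
    · exact ⟨g, Or.inl ⟨hg, by simp [hg1, hg2]⟩, hvg⟩
  · -- M \ {e,f} ⊆ M'
    exact fun g hg => Or.inl hg
  · -- ≠ M
    intro hEq
    have hmem : s(a,b) ∈ (M \ {s(a,b), s(c,d)}) ∪ {s(a,d), s(c,b)} := by
      rw [hEq]; exact he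
    rcases hmem with ⟨-, hn⟩ | hn
    · exact hn (by simp)
    · rcases hn with h | h
      · rw [Sym2.eq_iff] at h
        rcases h with ⟨-, h⟩ | ⟨h, -⟩ <;> simp_all
      · rw [Set.mem_singleton_iff] at h
        rw [Sym2.eq_iff] at h
        rcases h with ⟨h, -⟩ | ⟨-, h⟩ <;> simp_all

lemma forcingNum_le (h : IsForcingSet G M S) : forcingNum G M ≤ S.ncard :=
  Nat.sInf_le ⟨S, h, rfl⟩

lemma forcingNum_ge (hM : IsPM G M) {c : ℕ}
    (h : ∀ S, S ⊆ M → S.ncard < c → ∃ M', IsPM G M' ∧ S ⊆ M' ∧ M' ≠ M) :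
    c ≤ forcingNum G M := by
  have hne : {k | ∃ S, IsForcingSet G M S ∧ S.ncard = k}.Nonempty :=
    ⟨M.ncard, M, pm_self_forcing hM, rfl⟩
  obtain ⟨S, hS, hcard⟩ := Nat.sInf_mem hne
  rw [forcingNum, ← hcard]
  by_contra hlt
  push_neg at hlt
  obtain ⟨M', hM', hSM', hne'⟩ := h S hS.1 hlt
  exact hne' (hS.2 M' hM' hSM')

end Helpers2

section PairIdx
variable {n k : ℕ} {i j j' : Fin n}

lemma pairIdx_symm (h : pairIdx k i j) : pairIdx k j i := by
  obtain ⟨t, ht, h⟩ := h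
  exact ⟨t, ht, h.symm⟩

lemma pairIdx_ne (h : pairIdx k i j) : i ≠ j := by
  obtain ⟨t, ht, h⟩ := h
  intro hij
  rw [hij] at h
  omega

lemma pairIdx_lt (h : pairIdx k i j) : i.val < 2 * k ∧ j.val < 2 * k := by
  obtain ⟨t, ht, h⟩ := h
  omega

lemma pairIdx_unique (h : pairIdx k i j) (h' : pairIdx k i j') : j = j' := by
  obtain ⟨t, ht, h⟩ := h
  obtain ⟨t', ht', h'⟩ := h'
  apply Fin.ext
  omega

lemma pairIdx_t (h : pairIdx k i j) :
    i.val / 2 < k ∧ j.val / 2 = i.val / 2 ∧ (i.val + j.val) = 4 * (i.val / 2) + 1 := by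
  obtain ⟨t, ht, h⟩ := h
  omega

end PairIdx

section Adj
variable {n k : ℕ} {i j : Fin n}

lemma adj_lr : (Hgraph n k).Adj (Sum.inl i) (Sum.inr j) ↔ (i = j ∨ ¬ pairIdx k i j) := by
  rw [Hgraph, fromRel_adj]
  simp only [ne_eq, reduceCtorEq, not_false_eq_true, true_and]
  constructor
  · rintro (h | h)
    · exact h
    · exact absurd h not_false
  · exact Or.inl

lemma adj_rl : (Hgraph n k).Adj (Sum.inr j) (Sum.inl i) ↔ (i = j ∨ ¬ pairIdx k i j) := by
  rw [adj_comm, adj_lr]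

lemma adj_ll : (Hgraph n k).Adj (Sum.inl i) (Sum.inl j) ↔ pairIdx k i j := by
  rw [Hgraph, fromRel_adj]
  constructor
  · rintro ⟨-, (h | h)⟩
    · exact h
    · exact pairIdx_symm h
  · intro h
    exact ⟨by simpa using pairIdx_ne h, Or.inl h⟩

lemma adj_rr : (Hgraph n k).Adj (Sum.inr i) (Sum.inr j) ↔ pairIdx k i j := by
  rw [Hgraph, fromRel_adj]
  constructor
  · rintro ⟨-, (h | h)⟩
    · exact h
    · exact pairIdx_symm h
  · intro h
    exact ⟨by simpa using pairIdx_ne h, Or.inl h⟩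

lemma adj_diag : (Hgraph n k).Adj (Sum.inl i) (Sum.inr i) := adj_lr.mpr (Or.inl rfl)

end Adj


section M0sec
variable {n k : ℕ}

lemma M0_isPM : IsPM (Hgraph n k) (M0 n) := by
  refine ⟨?_, ?_, ?_⟩
  · rintro e ⟨i, rfl⟩
    exact adj_diag
  · rintro e ⟨i, rfl⟩ f ⟨j, rfl⟩ hef v hv hv'
    have hij : i ≠ j := fun h => hef (by rw [h])
    rcases Sym2.mem_iff.mp hv with rfl | rfl <;>
      rcases Sym2.mem_iff.mp hv' with h | h <;> simp_all
  · rintro (i | i)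
    · exact ⟨s(Sum.inl i, Sum.inr i), ⟨i, rfl⟩, by simp⟩
    · exact ⟨s(Sum.inl i, Sum.inr i), ⟨i, rfl⟩, by simp⟩

lemma M0_eq_range : M0 n = Set.range (fun i : Fin n => s(Sum.inl i, Sum.inr i)) := by
  ext e; constructor
  · rintro ⟨i, rfl⟩; exact ⟨i, rfl⟩
  · rintro ⟨i, rfl⟩; exact ⟨i, rfl⟩

lemma diag_inj : Function.Injective (fun i : Fin n => s(Sum.inl i, Sum.inr i) : Fin n → Sym2 (Fin n ⊕ Fin n)) := by
  intro i j h
  simp only [Sym2.eq_iff] at h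
  rcases h with ⟨h, -⟩ | ⟨h, -⟩ <;> simp_all

lemma M0_ncard : (M0 n).ncard = n := by
  rw [M0_eq_range, ← Set.image_univ, Set.ncard_image_of_injective _ diag_inj]
  simp [Set.ncard_univ]

lemma forcingNum_M0 (hn : 1 ≤ n) : forcingNum (Hgraph n k) (M0 n) = n - 1 := by
  apply le_antisymm
  · -- upper bound: drop one edge
    have h0 : s(Sum.inl (⟨0, hn⟩ : Fin n), Sum.inr (⟨0, hn⟩ : Fin n)) ∈ M0 n := ⟨_, rfl⟩
    have := forcingNum_le (drop_forcing M0_isPM h0 (G := Hgraph n k))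
    rwa [Set.ncard_diff_singleton_of_mem h0, M0_ncard] at this
  · apply forcingNum_ge M0_isPM
    intro S hS hcard
    -- find two indices whose diagonal edges are not in S
    set T : Set (Fin n) := {i | s(Sum.inl i, Sum.inr i) ∈ S} with hT
    have hST : S = (fun i : Fin n => s(Sum.inl i, Sum.inr i)) '' T := by
      apply Set.Subset.antisymm
      · intro e he
        obtain ⟨i, rfl⟩ := hS he
        exact ⟨i, he, rfl⟩
      · rintro e ⟨i, hi, rfl⟩; exact hi
    have hTcard : T.ncard = S.ncard := by
      rw [hST, Set.ncard_image_of_injective _ diag_inj]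
    have hcompl : 1 < Tᶜ.ncard := by
      have h2 := Set.ncard_add_ncard_compl T
      have h3 : Nat.card (Fin n) = n := by simp
      omega
    obtain ⟨i, hi, j, hj, hij⟩ := Set.one_lt_ncard (Set.toFinite _) |>.mp hcompl
    have hiS : s(Sum.inl i, Sum.inr i) ∉ S := hi
    have hjS : s(Sum.inl j, Sum.inr j) ∉ S := hj
    have hiM : s(Sum.inl i, Sum.inr i) ∈ M0 n := ⟨i, rfl⟩
    have hjM : s(Sum.inl j, Sum.inr j) ∈ M0 n := ⟨j, rfl⟩
    have hefne : s(Sum.inl i, Sum.inr i) ≠ s(Sum.inl j, Sum.inr j) := by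
      intro h
      rcases Sym2.eq_iff.mp h with ⟨h1, -⟩ | ⟨h1, -⟩
      · exact hij (Sum.inl_injective h1)
      · exact Sum.inl_ne_inr h1
    by_cases hp : pairIdx k i j
    · -- special swap
      obtain ⟨M', hM', hsub, hne⟩ := pm_swap (a := Sum.inl i) (b := Sum.inr i)
        (c := Sum.inr j) (d := Sum.inl j) M0_isPM hiM
        (by rw [Sym2.eq_swap (a := Sum.inr j)]; exact hjM)
        (by rw [Sym2.eq_swap (a := Sum.inr j)]; exact hefne)
        (adj_ll.mpr hp) (adj_rr.mpr (pairIdx_symm hp))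
      refine ⟨M', hM', ?_, hne⟩
      intro e he
      apply hsub
      refine ⟨hS he, ?_⟩
      rintro (rfl | h)
      · exact hiS he
      · rw [Set.mem_singleton_iff, Sym2.eq_swap] at h
        exact hjS (h ▸ he)
    · -- cross swap
      obtain ⟨M', hM', hsub, hne⟩ := pm_swap (a := Sum.inl i) (b := Sum.inr i)
        (c := Sum.inl j) (d := Sum.inr j) M0_isPM hiM hjM hefne
        (adj_lr.mpr (Or.inr hp))
        (adj_lr.mpr (Or.inr (fun h => hp (pairIdx_symm h))))
      refine ⟨M', hM', ?_, hne⟩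
      intro e he
      apply hsub
      refine ⟨hS he, ?_⟩
      rintro (rfl | h)
      · exact hiS he
      · rw [Set.mem_singleton_iff] at h
        exact hjS (h ▸ he)

end M0sec


section MaxSec
variable {n k : ℕ} {M : Set (Sym2 (Fin n ⊕ Fin n))}

lemma pm_ncard_H (hM : IsPM (Hgraph n k) M) : M.ncard = n := by
  have h := pm_ncard hM
  simp only [Fintype.card_sum, Fintype.card_fin] at h
  omega

lemma forcingNum_le_H (hn : 1 ≤ n) (hM : IsPM (Hgraph n k) M) :
    forcingNum (Hgraph n k) M ≤ n - 1 := by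
  obtain ⟨e, he, -⟩ := hM.2.2 (Sum.inl (⟨0, hn⟩ : Fin n))
  have h := forcingNum_le (drop_forcing hM he)
  rwa [Set.ncard_diff_singleton_of_mem he, pm_ncard_H hM] at h

lemma maxForcing_H (hn : 1 ≤ n) : maxForcing (Hgraph n k) = n - 1 := by
  have hmem : (n-1) ∈ {c | ∃ M, IsPM (Hgraph n k) M ∧ forcingNum (Hgraph n k) M = c} :=
    ⟨M0 n, M0_isPM, forcingNum_M0 hn⟩
  have hub : ∀ c ∈ {c | ∃ M, IsPM (Hgraph n k) M ∧ forcingNum (Hgraph n k) M = c}, c ≤ n - 1 := by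
    rintro c ⟨M, hM, rfl⟩
    exact forcingNum_le_H hn hM
  apply le_antisymm
  · exact csSup_le ⟨n-1, hmem⟩ hub
  · exact le_csSup ⟨n-1, hub⟩ hmem

end MaxSec


section M1sec

def uSpec (n k : ℕ) : Set (Sym2 (Fin n ⊕ Fin n)) :=
  {e | ∃ i j : Fin n, pairIdx k i j ∧ e = s(Sum.inl i, Sum.inl j)}

def vSpec (n k : ℕ) : Set (Sym2 (Fin n ⊕ Fin n)) :=
  {e | ∃ i j : Fin n, pairIdx k i j ∧ e = s(Sum.inr i, Sum.inr j)}

def DiagSet (n k : ℕ) : Set (Sym2 (Fin n ⊕ Fin n)) :=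
  {e | ∃ i : Fin n, 2*k ≤ i.val ∧ e = s(Sum.inl i, Sum.inr i)}

def M1 (n k : ℕ) : Set (Sym2 (Fin n ⊕ Fin n)) := uSpec n k ∪ vSpec n k ∪ DiagSet n k

def S1 (n k : ℕ) : Set (Sym2 (Fin n ⊕ Fin n)) :=
  uSpec n k ∪ {e | ∃ i : Fin n, i.val = 2*k ∧ 2*k+1 < n ∧ e = s(Sum.inl i, Sum.inr i)}

variable {n k : ℕ}

lemma exists_partner {j : Fin n} (hj : j.val < 2*k) (hkn : 2*k ≤ n) :
    ∃ j' : Fin n, pairIdx k j j' := by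
  by_cases hp : j.val % 2 = 0
  · refine ⟨⟨j.val + 1, by omega⟩, j.val / 2, by omega, Or.inl ⟨by omega, ?_⟩⟩
    show j.val + 1 = 2 * (j.val / 2) + 1
    omega
  · refine ⟨⟨j.val - 1, by omega⟩, j.val / 2, by omega, Or.inr ⟨?_, by omega⟩⟩
    show j.val - 1 = 2 * (j.val / 2)
    omega

lemma M1_isPM (hkn : 2*k < n) : IsPM (Hgraph n k) (M1 n k) := by
  refine ⟨?_, ?_, ?_⟩
  · rintro e ((⟨i, j, hp, rfl⟩ | ⟨i, j, hp, rfl⟩) | ⟨i, -, rfl⟩)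
    · exact adj_ll.mpr hp
    · exact adj_rr.mpr hp
    · exact adj_diag
  · -- pairwise disjoint
    rintro e he f hf hef v hv hv'
    apply hef
    rcases he with (⟨a, b, hp, rfl⟩ | ⟨a, b, hp, rfl⟩) | ⟨a, ha, rfl⟩ <;>
      rcases hf with (⟨a', b', hp', rfl⟩ | ⟨a', b', hp', rfl⟩) | ⟨a', ha', rfl⟩
    · -- uSpec vs uSpec
      rcases Sym2.mem_iff.mp hv with rfl | rfl <;> rcases Sym2.mem_iff.mp hv' with h | h <;>
        rw [Sum.inl.injEq] at h <;> subst h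
      · rw [pairIdx_unique hp hp']
      · rw [pairIdx_unique hp (pairIdx_symm hp'), Sym2.eq_swap]
      · rw [pairIdx_unique (pairIdx_symm hp) hp', ← Sym2.eq_swap]
      · rw [pairIdx_unique (pairIdx_symm hp) (pairIdx_symm hp'), ← Sym2.eq_swap, Sym2.eq_swap]
    · -- uSpec vs vSpec: impossible shared vertex
      exfalso
      rcases Sym2.mem_iff.mp hv with rfl | rfl <;> rcases Sym2.mem_iff.mp hv' with h | h <;> exact Sum.inl_ne_inr h
    · -- uSpec vs Diag
      exfalso
      have hlt := pairIdx_lt hp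
      rcases Sym2.mem_iff.mp hv with rfl | rfl <;> rcases Sym2.mem_iff.mp hv' with h | h <;>
        first
        | (rw [Sum.inl.injEq] at h; subst h; omega)
        | exact Sum.inl_ne_inr h
    · exfalso
      rcases Sym2.mem_iff.mp hv with rfl | rfl <;> rcases Sym2.mem_iff.mp hv' with h | h <;>
        exact Sum.inl_ne_inr h.symm
    · rcases Sym2.mem_iff.mp hv with rfl | rfl <;> rcases Sym2.mem_iff.mp hv' with h | h <;>
        rw [Sum.inr.injEq] at h <;> subst h
      · rw [pairIdx_unique hp hp']
      · rw [pairIdx_unique hp (pairIdx_symm hp'), Sym2.eq_swap]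
      · rw [pairIdx_unique (pairIdx_symm hp) hp', ← Sym2.eq_swap]
      · rw [pairIdx_unique (pairIdx_symm hp) (pairIdx_symm hp'), ← Sym2.eq_swap, Sym2.eq_swap]
    · exfalso
      have hlt := pairIdx_lt hp
      rcases Sym2.mem_iff.mp hv with rfl | rfl <;> rcases Sym2.mem_iff.mp hv' with h | h <;>
        first
        | (rw [Sum.inr.injEq] at h; subst h; omega)
        | exact Sum.inl_ne_inr h.symm
    · exfalso
      have hlt := pairIdx_lt hp'
      rcases Sym2.mem_iff.mp hv with rfl | rfl <;> rcases Sym2.mem_iff.mp hv' with h | h <;>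
        first
        | (rw [Sum.inl.injEq] at h; subst h; omega)
        | exact Sum.inl_ne_inr h.symm
    · exfalso
      have hlt := pairIdx_lt hp'
      rcases Sym2.mem_iff.mp hv with rfl | rfl <;> rcases Sym2.mem_iff.mp hv' with h | h <;>
        first
        | (rw [Sum.inr.injEq] at h; subst h; omega)
        | exact Sum.inl_ne_inr h
    · -- Diag vs Diag
      rcases Sym2.mem_iff.mp hv with rfl | rfl <;> rcases Sym2.mem_iff.mp hv' with h | h <;>
        first
        | (rw [Sum.inl.injEq] at h; subst h; rfl)
        | (rw [Sum.inr.injEq] at h; subst h; rfl)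
        | exact absurd h (Sum.inl_ne_inr)
        | exact absurd h.symm (Sum.inl_ne_inr)
  · -- cover
    intro v
    have key : ∀ i : Fin n, (∃ e ∈ M1 n k, Sum.inl i ∈ e) ∧ (∃ e ∈ M1 n k, Sum.inr i ∈ e) := by
      intro i
      by_cases hi : i.val < 2*k
      · obtain ⟨j, hj⟩ := exists_partner hi (le_of_lt hkn)
        constructor
        · exact ⟨s(Sum.inl i, Sum.inl j), Or.inl (Or.inl ⟨i, j, hj, rfl⟩), by simp⟩
        · exact ⟨s(Sum.inr i, Sum.inr j), Or.inl (Or.inr ⟨i, j, hj, rfl⟩), by simp⟩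
      · constructor <;>
          exact ⟨s(Sum.inl i, Sum.inr i), Or.inr ⟨i, by omega, rfl⟩, by simp⟩
    rcases v with i | i
    · exact (key i).1
    · exact (key i).2

end M1sec


section S1sec
variable {n k : ℕ}

lemma uSpec_eq (hkn : 2*k ≤ n) : uSpec n k = Set.range (fun t : Fin k =>
    s(Sum.inl (⟨2*t.val, by have := t.isLt; omega⟩ : Fin n),
      Sum.inl (⟨2*t.val+1, by have := t.isLt; omega⟩ : Fin n))) := by
  ext e
  constructor
  · rintro ⟨i, j, ⟨t, ht, h⟩, rfl⟩
    refine ⟨⟨t, ht⟩, ?_⟩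
    rcases h with ⟨h1, h2⟩ | ⟨h1, h2⟩
    · have hi : (⟨2*t, by omega⟩ : Fin n) = i := Fin.ext (by simpa using h1.symm)
      have hj : (⟨2*t+1, by omega⟩ : Fin n) = j := Fin.ext (by simpa using h2.symm)
      simp only [Sym2.eq_iff]
      left
      exact ⟨congrArg Sum.inl hi, congrArg Sum.inl hj⟩
    · have hi : (⟨2*t, by omega⟩ : Fin n) = j := Fin.ext (by simpa using h1.symm)
      have hj : (⟨2*t+1, by omega⟩ : Fin n) = i := Fin.ext (by simpa using h2.symm)
      simp only [Sym2.eq_iff]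
      right
      exact ⟨congrArg Sum.inl hi, congrArg Sum.inl hj⟩
  · rintro ⟨t, rfl⟩
    exact ⟨_, _, ⟨t.val, t.isLt, Or.inl ⟨rfl, rfl⟩⟩, rfl⟩

lemma uSpec_ncard (hkn : 2*k ≤ n) : (uSpec n k).ncard = k := by
  rw [uSpec_eq hkn, ← Set.image_univ, Set.ncard_image_of_injective, Set.ncard_univ]
  · simp
  · intro t t' h
    rw [Sym2.eq_iff] at h
    apply Fin.ext
    rcases h with ⟨h1, -⟩ | ⟨h1, h2⟩
    · rw [Sum.inl.injEq, Fin.mk.injEq] at h1; omega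
    · rw [Sum.inl.injEq, Fin.mk.injEq] at h1
      rw [Sum.inl.injEq, Fin.mk.injEq] at h2
      omega

lemma S1_ncard (hkn : 2*k < n) (hkn2 : n ≤ 2*k+2) : (S1 n k).ncard = n / 2 := by
  by_cases hc : 2*k+1 < n
  · have hX : {e : Sym2 (Fin n ⊕ Fin n) | ∃ i : Fin n, i.val = 2*k ∧ 2*k+1 < n ∧ e = s(Sum.inl i, Sum.inr i)}
        = {s(Sum.inl (⟨2*k, hkn⟩ : Fin n), Sum.inr (⟨2*k, hkn⟩ : Fin n))} := by
      ext e
      constructor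
      · rintro ⟨i, hi, -, rfl⟩
        have : i = ⟨2*k, hkn⟩ := Fin.ext hi
        rw [this]; rfl
      · rintro rfl
        exact ⟨_, rfl, hc, rfl⟩
    rw [S1, hX, Set.union_singleton, Set.ncard_insert_of_notMem ?notmem (Set.toFinite _),
      uSpec_ncard (le_of_lt hkn)]
    · omega
    case notmem =>
      rintro ⟨i, j, -, h⟩
      rw [Sym2.eq_iff] at h
      rcases h with ⟨-, h⟩ | ⟨-, h⟩ <;> exact Sum.inl_ne_inr h.symm
  · have hX : {e : Sym2 (Fin n ⊕ Fin n) | ∃ i : Fin n, i.val = 2*k ∧ 2*k+1 < n ∧ e = s(Sum.inl i, Sum.inr i)}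
        = ∅ := by
      ext e
      simp only [Set.mem_setOf_eq, Set.mem_empty_iff_false, iff_false, not_exists]
      rintro i ⟨-, h, -⟩
      exact hc h
    rw [S1, hX, Set.union_empty, uSpec_ncard (le_of_lt hkn)]
    omega

lemma S1_forcing (hkn : 2*k < n) (hkn2 : n ≤ 2*k+2) :
    IsForcingSet (Hgraph n k) (M1 n k) (S1 n k) := by
  constructor
  · rintro e (h | ⟨i, hi, -, rfl⟩)
    · exact Or.inl (Or.inl h)
    · exact Or.inr ⟨i, by omega, rfl⟩
  · intro M' hM' hsub
    apply pm_superset_eq hM' (M1_isPM hkn)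
    have covL : ∀ j : Fin n, j.val < 2*k →
        ∃ e ∈ S1 n k, Sum.inl j ∈ e ∧ (∀ i : Fin n, Sum.inr i ∉ e) := by
      intro j hj
      obtain ⟨j', hj'⟩ := exists_partner hj (le_of_lt hkn)
      refine ⟨s(Sum.inl j, Sum.inl j'), Or.inl ⟨j, j', hj', rfl⟩, by simp, ?_⟩
      intro i hi
      rcases Sym2.mem_iff.mp hi with h | h <;> exact Sum.inl_ne_inr h.symm
    have stepTop : ∀ i : Fin n, 2*k ≤ i.val → s(Sum.inl i, Sum.inr i) ∈ M' := by
      intro i hi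
      by_cases hc : i.val = 2*k ∧ 2*k+1 < n
      · exact hsub (Or.inr ⟨i, hc.1, hc.2, rfl⟩)
      · -- i is the top index: every other inl j is covered by an S1 edge avoiding inr i
        have covAll : ∀ j : Fin n, j ≠ i →
            ∃ e ∈ S1 n k, Sum.inl j ∈ e ∧ Sum.inr i ∉ e := by
          intro j hji
          by_cases hj : j.val < 2*k
          · obtain ⟨e, he, h1, h2⟩ := covL j hj
            exact ⟨e, he, h1, h2 i⟩
          · -- j.val ≥ 2k, j ≠ i: forces j.val = 2k, i.val = 2k+1, n = 2k+2
            have hjv : j.val = 2*k := by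
              have := j.isLt; have := i.isLt
              by_contra hne
              have h1 : j.val = 2*k+1 := by omega
              have h2 : i.val = 2*k+1 := by
                rcases Nat.lt_or_ge i.val (2*k+1) with h | h
                · exfalso; apply hc; exact ⟨by omega, by omega⟩
                · omega
              exact hji (Fin.ext (by omega))
            have hiv : i.val = 2*k+1 := by
              have := i.isLt
              rcases Nat.lt_or_ge i.val (2*k+1) with h | h
              · exfalso
                apply hji
                apply Fin.ext
                omega
              · omega
            refine ⟨s(Sum.inl j, Sum.inr j), Or.inr ⟨j, hjv, by omega, rfl⟩, by simp, ?_⟩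
            intro hmem
            rcases Sym2.mem_iff.mp hmem with h | h
            · exact Sum.inl_ne_inr h.symm
            · rw [Sum.inr.injEq] at h
              exact hji h.symm
        obtain ⟨g, hg, hig⟩ := hM'.2.2 (Sum.inr i)
        obtain ⟨x, rfl⟩ := Sym2.mem_iff_exists.mp hig
        rcases x with j | j
        · -- partner is inl j
          by_cases hji : j = i
          · subst hji
            rwa [Sym2.eq_swap] at hg
          · exfalso
            obtain ⟨e0, he0, hje0, hnie0⟩ := covAll j hji
            have he0' : e0 ∈ M' := hsub he0
            have hne : s(Sum.inr i, Sum.inl j) ≠ e0 := by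
              intro h
              exact hnie0 (h ▸ (Sym2.mem_mk_left _ _))
            exact hM'.2.1 _ hg e0 he0' hne (Sum.inl j) (Sym2.mem_mk_right _ _) hje0
        · -- partner is inr j: needs pairIdx, contradicting 2k ≤ i
          exfalso
          have hadj := hM'.1 hg
          rw [SimpleGraph.mem_edgeSet, adj_rr] at hadj
          have := pairIdx_lt hadj
          omega
    have stepV : ∀ i j : Fin n, pairIdx k i j → s(Sum.inr i, Sum.inr j) ∈ M' := by
      intro i j hp
      obtain ⟨g, hg, hig⟩ := hM'.2.2 (Sum.inr i)
      obtain ⟨x, rfl⟩ := Sym2.mem_iff_exists.mp hig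
      rcases x with j' | j'
      · -- partner inl j': conflict
        exfalso
        by_cases hj' : j'.val < 2*k
        · obtain ⟨e0, he0, hje0, hnie0⟩ := covL j' hj'
          have hne : s(Sum.inr i, Sum.inl j') ≠ e0 := by
            intro h
            exact (hnie0 i) (h ▸ (Sym2.mem_mk_left _ _))
          exact hM'.2.1 _ hg e0 (hsub he0) hne (Sum.inl j') (Sym2.mem_mk_right _ _) hje0
        · have he0 := stepTop j' (by omega)
          have hne : s(Sum.inr i, Sum.inl j') ≠ s(Sum.inl j', Sum.inr j') := by
            intro h
            rw [Sym2.eq_iff] at h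
            rcases h with ⟨h1, -⟩ | ⟨h2, -⟩
            · exact Sum.inl_ne_inr h1.symm
            · rw [Sum.inr.injEq] at h2
              have hlt := pairIdx_lt hp
              subst h2
              omega
          exact hM'.2.1 _ hg _ he0 hne (Sum.inl j') (Sym2.mem_mk_right _ _) (Sym2.mem_mk_left _ _)
      · -- partner inr j': j' = j
        have hadj := hM'.1 hg
        rw [SimpleGraph.mem_edgeSet, adj_rr] at hadj
        rwa [← pairIdx_unique hp hadj] at hg
    rintro e ((h | ⟨i, j, hp, rfl⟩) | ⟨i, hi, rfl⟩)
    · exact hsub (Or.inl h)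
    · exact stepV i j hp
    · exact stepTop i hi

end S1sec

section MinLB
variable {n k : ℕ}

/-- sum of the two endpoint indices of an edge -/
def sIdx : Sym2 (Fin n ⊕ Fin n) → ℕ :=
  Sym2.lift ⟨fun x y => (Sum.elim Fin.val Fin.val x) + (Sum.elim Fin.val Fin.val y),
    by intro x y; dsimp; omega⟩

/-- the special-pair index of a special edge -/
def tOf (e : Sym2 (Fin n ⊕ Fin n)) : ℕ := (sIdx e) / 4

lemma sIdx_mk (x y : Fin n ⊕ Fin n) :
    sIdx s(x, y) = (Sum.elim Fin.val Fin.val x) + (Sum.elim Fin.val Fin.val y) := rfl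

lemma tOf_ll {a b : Fin n} (h : pairIdx k a b) : tOf s(Sum.inl a, Sum.inl b) = a.val / 2 := by
  obtain ⟨t, ht, h⟩ := h
  rw [tOf, sIdx_mk]
  simp only [Sum.elim_inl]
  omega

lemma tOf_rr {a b : Fin n} (h : pairIdx k a b) : tOf s(Sum.inr a, Sum.inr b) = a.val / 2 := by
  obtain ⟨t, ht, h⟩ := h
  rw [tOf, sIdx_mk]
  simp only [Sum.elim_inr]
  omega

lemma pairIdx_t_lt {a b : Fin n} (h : pairIdx k a b) : a.val / 2 < k ∧ b.val / 2 = a.val / 2 := by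
  obtain ⟨t, ht, h⟩ := h
  omega

lemma pairIdx_left_unique {i i' j : Fin n} (h : pairIdx k i j) (h' : pairIdx k i' j) : i = i' :=
  pairIdx_unique (pairIdx_symm h) (pairIdx_symm h')

lemma pairIdx_mem_of_t {a b c : Fin n} (h : pairIdx k a b) (hc : c.val / 2 = a.val / 2)
    (hc2 : c.val < 2 * k) : c = a ∨ c = b := by
  obtain ⟨t, ht, h⟩ := h
  rcases h with ⟨h1, h2⟩ | ⟨h1, h2⟩
  · rcases Nat.lt_or_ge c.val (2*t+1) with h | h
    · left; apply Fin.ext; omega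
    · right; apply Fin.ext; omega
  · rcases Nat.lt_or_ge c.val (2*t+1) with h | h
    · right; apply Fin.ext; omega
    · left; apply Fin.ext; omega

lemma three_distinct {α : Type*} {s : Set α} (hfin : s.Finite) (h : 3 ≤ s.ncard) :
    ∃ a ∈ s, ∃ b ∈ s, ∃ c ∈ s, a ≠ b ∧ a ≠ c ∧ b ≠ c := by
  obtain ⟨a, ha⟩ := Set.nonempty_of_ncard_ne_zero (s := s) (by omega)
  have h2 : 2 ≤ (s \ {a}).ncard := by
    rw [Set.ncard_diff_singleton_of_mem ha]; omega
  obtain ⟨b, hb⟩ := Set.nonempty_of_ncard_ne_zero (s := s \ {a}) (by omega)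
  have h3 : 1 ≤ ((s \ {a}) \ {b}).ncard := by
    rw [Set.ncard_diff_singleton_of_mem hb]; omega
  obtain ⟨c, hc⟩ := Set.nonempty_of_ncard_ne_zero (s := (s \ {a}) \ {b}) (by omega)
  refine ⟨a, ha, b, hb.1, c, hc.1.1, ?_, ?_, ?_⟩
  · intro h; exact hb.2 (by simp [h])
  · intro h; exact hc.1.2 (by simp [h])
  · intro h; exact hc.2 (by simp [h])

lemma four_distinct {α : Type*} {s : Set α} (hfin : s.Finite) (h : 4 ≤ s.ncard) :
    ∃ a ∈ s, ∃ b ∈ s, ∃ c ∈ s, ∃ d ∈ s,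
      a ≠ b ∧ a ≠ c ∧ a ≠ d ∧ b ≠ c ∧ b ≠ d ∧ c ≠ d := by
  obtain ⟨a, ha⟩ := Set.nonempty_of_ncard_ne_zero (s := s) (by omega)
  have h2 : 3 ≤ (s \ {a}).ncard := by
    rw [Set.ncard_diff_singleton_of_mem ha]; omega
  obtain ⟨b, hb, c, hc, d, hd, hbc, hbd, hcd⟩ := three_distinct hfin.diff h2
  refine ⟨a, ha, b, hb.1, c, hc.1, d, hd.1, ?_, ?_, ?_, hbc, hbd, hcd⟩
  · intro h; exact hb.2 (by simp [h.symm])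
  · intro h; exact hc.2 (by simp [h.symm])
  · intro h; exact hd.2 (by simp [h.symm])

end MinLB

section MinLB2
open Sum
variable {n k : ℕ}

set_option maxHeartbeats 2000000 in
lemma min_lb (hkn : 2*k < n) (hkn2 : n ≤ 2*k+2)
    {M S : Set (Sym2 (Fin n ⊕ Fin n))}
    (hM : IsPM (Hgraph n k) M) (hS : S ⊆ M) (hcard : S.ncard < n/2)
    (hforce : ∀ M', IsPM (Hgraph n k) M' → S ⊆ M' → M' = M) : False := by
  classical
  set N : Set (Sym2 (Fin n ⊕ Fin n)) := M \ S with hN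
  have hNM : N ⊆ M := Set.diff_subset
  -- no improving swap
  have noswap : ∀ (a b c d : Fin n ⊕ Fin n), s(a,b) ∈ N → s(c,d) ∈ N →
      s(a,b) ≠ s(c,d) → (Hgraph n k).Adj a d → (Hgraph n k).Adj c b → False := by
    intro a b c d he hf hef had hcb
    obtain ⟨M', hM', hsub, hne⟩ := pm_swap hM he.1 hf.1 hef had hcb
    apply hne
    apply hforce M' hM'
    intro x hx
    apply hsub
    refine ⟨hS hx, ?_⟩
    rintro (rfl | hx')
    · exact he.2 hx
    · rw [Set.mem_singleton_iff] at hx'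
      subst hx'
      exact hf.2 hx
  set NL : Set (Sym2 (Fin n ⊕ Fin n)) := {e | e ∈ N ∧ ∃ a b : Fin n, e = s(inl a, inl b)} with hNL
  set NR : Set (Sym2 (Fin n ⊕ Fin n)) := {e | e ∈ N ∧ ∃ a b : Fin n, e = s(inr a, inr b)} with hNR
  set NC : Set (Sym2 (Fin n ⊕ Fin n)) := {e | e ∈ N ∧ ∃ a b : Fin n, e = s(inl a, inr b)} with hNC
  -- canonical decompositions
  have canonL : ∀ e ∈ NL, ∃ a b : Fin n, pairIdx k a b ∧ e = s(inl a, inl b) ∧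
      tOf e = a.val / 2 ∧ a.val / 2 < k := by
    rintro e ⟨heN, a, b, rfl⟩
    have hadj := hM.1 (hNM heN)
    rw [SimpleGraph.mem_edgeSet, adj_ll] at hadj
    exact ⟨a, b, hadj, rfl, tOf_ll hadj, (pairIdx_t_lt hadj).1⟩
  have canonR : ∀ e ∈ NR, ∃ a b : Fin n, pairIdx k a b ∧ e = s(inr a, inr b) ∧
      tOf e = a.val / 2 ∧ a.val / 2 < k := by
    rintro e ⟨heN, a, b, rfl⟩
    have hadj := hM.1 (hNM heN)
    rw [SimpleGraph.mem_edgeSet, adj_rr] at hadj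
    exact ⟨a, b, hadj, rfl, tOf_rr hadj, (pairIdx_t_lt hadj).1⟩
  -- partition of N
  have hcover : N = NL ∪ NR ∪ NC := by
    apply Set.Subset.antisymm
    · intro e he
      have hadj := hM.1 (hNM he)
      induction e using Sym2.ind with
      | _ x y =>
        rcases x with a | a <;> rcases y with b | b
        · exact Or.inl (Or.inl ⟨he, a, b, rfl⟩)
        · exact Or.inr ⟨he, a, b, rfl⟩
        · exact Or.inr ⟨he, b, a, Sym2.eq_swap⟩
        · exact Or.inl (Or.inr ⟨he, a, b, rfl⟩)
    · rintro e ((h | h) | h) <;> exact h.1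
  -- disjointness of the three classes
  have hdLR : Disjoint NL NR := by
    rw [Set.disjoint_left]
    rintro e ⟨-, a, b, rfl⟩ ⟨-, a', b', h⟩
    rw [Sym2.eq_iff] at h
    rcases h with ⟨h, -⟩ | ⟨h, -⟩ <;> exact Sum.inl_ne_inr h
  have hdLC : Disjoint (NL ∪ NR) NC := by
    rw [Set.disjoint_left]
    rintro e (⟨-, a, b, rfl⟩ | ⟨-, a, b, rfl⟩) ⟨-, a', b', h⟩
    · rw [Sym2.eq_iff] at h
      rcases h with ⟨-, h⟩ | ⟨h, -⟩ <;> exact Sum.inl_ne_inr h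
    · rw [Sym2.eq_iff] at h
      rcases h with ⟨h, -⟩ | ⟨-, h⟩ <;> exact Sum.inl_ne_inr h.symm
  have hsum : N.ncard = (NL ∪ NR).ncard + NC.ncard := by
    rw [hcover, Set.ncard_union_eq hdLC (Set.toFinite _) (Set.toFinite _)]
  -- N has many edges
  have hMcard : M.ncard = n := pm_ncard_H hM
  have hNcard : N.ncard = n - S.ncard := by
    rw [hN, Set.ncard_diff hS (Set.toFinite _), hMcard]
  -- tOf is injective on NL ∪ NR
  have hinj : Set.InjOn tOf (NL ∪ NR) := by
    rintro e he e' he' htt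
    rcases he with he | he <;> rcases he' with he' | he'
    · obtain ⟨a, b, hp, rfl, ht, -⟩ := canonL e he
      obtain ⟨a', b', hp', rfl, ht', -⟩ := canonL e' he'
      rw [ht, ht'] at htt
      have hlt : a.val < 2*k := (pairIdx_lt hp).1
      rcases pairIdx_mem_of_t hp' (by omega) hlt with h | h
      · have hb : b = b' := pairIdx_unique hp (h.symm ▸ hp')
        rw [h, hb]
      · have ha' : b = a' := pairIdx_unique hp (pairIdx_symm (h.symm ▸ hp'))
        rw [h, ha']
        exact Sym2.eq_swap
    · -- NL vs NR with equal t: forbidden by the uSpec/vSpec swap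
      exfalso
      obtain ⟨a, b, hp, rfl, ht, -⟩ := canonL e he
      obtain ⟨a', b', hp', rfl, ht', -⟩ := canonR e' he'
      rw [ht, ht'] at htt
      have hne12 : s(Sum.inl a, Sum.inl b) ≠ s(Sum.inr b', Sum.inr a') := by
        intro hEq
        rw [Sym2.eq_iff] at hEq
        rcases hEq with ⟨h1, -⟩ | ⟨h1, -⟩ <;> exact Sum.inl_ne_inr h1
      rcases pairIdx_mem_of_t hp htt.symm ((pairIdx_lt hp').1) with h | h
      · -- a' = a
        subst h
        have hb : b' = b := pairIdx_unique hp' hp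
        subst hb
        exact noswap (Sum.inl a') (Sum.inl b') (Sum.inr b') (Sum.inr a') he.1
          (by rw [Sym2.eq_swap]; exact he'.1) hne12
          (adj_lr.mpr (Or.inl rfl)) (adj_rl.mpr (Or.inl rfl))
      · -- a' = b
        subst h
        have hb : b' = a := pairIdx_unique hp' (pairIdx_symm hp)
        subst hb
        exact noswap (Sum.inl b') (Sum.inl a') (Sum.inr a') (Sum.inr b')
          he.1 he'.1
          (by intro hEq; rw [Sym2.eq_iff] at hEq;
              rcases hEq with ⟨h1, -⟩ | ⟨h1, -⟩ <;> exact Sum.inl_ne_inr h1)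
          (adj_lr.mpr (Or.inl rfl)) (adj_rl.mpr (Or.inl rfl))
    · -- NR vs NL: symmetric
      exfalso
      obtain ⟨a, b, hp, rfl, ht, -⟩ := canonR e he
      obtain ⟨a', b', hp', rfl, ht', -⟩ := canonL e' he'
      rw [ht, ht'] at htt
      rcases pairIdx_mem_of_t hp' htt ((pairIdx_lt hp).1) with h | h
      · -- a = a'
        subst h
        have hb : b = b' := pairIdx_unique hp hp'
        subst hb
        exact noswap (Sum.inl a) (Sum.inl b) (Sum.inr b) (Sum.inr a) he'.1
          (by rw [Sym2.eq_swap]; exact he.1)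
          (by intro hEq; rw [Sym2.eq_iff] at hEq;
              rcases hEq with ⟨h1, -⟩ | ⟨h1, -⟩ <;> exact Sum.inl_ne_inr h1)
          (adj_lr.mpr (Or.inl rfl)) (adj_rl.mpr (Or.inl rfl))
      · -- a = b'
        subst h
        have hb : b = a' := pairIdx_unique hp (pairIdx_symm hp')
        subst hb
        exact noswap (Sum.inl b) (Sum.inl a) (Sum.inr a) (Sum.inr b)
          he'.1 he.1
          (by intro hEq; rw [Sym2.eq_iff] at hEq;
              rcases hEq with ⟨h1, -⟩ | ⟨h1, -⟩ <;> exact Sum.inl_ne_inr h1)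
          (adj_lr.mpr (Or.inl rfl)) (adj_rl.mpr (Or.inl rfl))
    · obtain ⟨a, b, hp, rfl, ht, -⟩ := canonR e he
      obtain ⟨a', b', hp', rfl, ht', -⟩ := canonR e' he'
      rw [ht, ht'] at htt
      have hlt : a.val < 2*k := (pairIdx_lt hp).1
      rcases pairIdx_mem_of_t hp' (by omega) hlt with h | h
      · have hb : b = b' := pairIdx_unique hp (h.symm ▸ hp')
        rw [h, hb]
      · have ha' : b = a' := pairIdx_unique hp (pairIdx_symm (h.symm ▸ hp'))
        rw [h, ha']
        exact Sym2.eq_swap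
  -- counting: NL ∪ NR injects into the special pair indices below k
  have hLRk : (NL ∪ NR).ncard ≤ k := by
    have himg : tOf '' (NL ∪ NR) ⊆ ↑(Finset.range k) := by
      rintro t ⟨e, he, rfl⟩
      simp only [Finset.coe_range, Set.mem_Iio]
      rcases he with he | he
      · obtain ⟨a, b, hp, rfl, ht, hk2⟩ := canonL e he; rw [ht]; exact hk2
      · obtain ⟨a, b, hp, rfl, ht, hk2⟩ := canonR e he; rw [ht]; exact hk2
    calc (NL ∪ NR).ncard = (tOf '' (NL ∪ NR)).ncard := (Set.ncard_image_of_injOn hinj).symm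
      _ ≤ (↑(Finset.range k) : Set ℕ).ncard := Set.ncard_le_ncard himg (Set.toFinite _)
      _ = k := by rw [Set.ncard_coe_finset, Finset.card_range]
  have COUNT1 : ∀ t0 : ℕ, (∀ e ∈ NL ∪ NR, tOf e ≠ t0) → t0 < k →
      (NL ∪ NR).ncard ≤ k - 1 := by
    intro t0 hex ht0
    have himg : tOf '' (NL ∪ NR) ⊆ ↑((Finset.range k).erase t0) := by
      rintro t ⟨e, he, rfl⟩
      simp only [Finset.coe_erase, Set.mem_diff, Finset.coe_range, Set.mem_Iio,
        Set.mem_singleton_iff]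
      refine ⟨?_, hex e he⟩
      rcases he with he | he
      · obtain ⟨a, b, hp, rfl, ht, hk2⟩ := canonL e he; rw [ht]; exact hk2
      · obtain ⟨a, b, hp, rfl, ht, hk2⟩ := canonR e he; rw [ht]; exact hk2
    calc (NL ∪ NR).ncard = (tOf '' (NL ∪ NR)).ncard := (Set.ncard_image_of_injOn hinj).symm
      _ ≤ (↑((Finset.range k).erase t0) : Set ℕ).ncard :=
        Set.ncard_le_ncard himg (Set.toFinite _)
      _ = k - 1 := by
        rw [Set.ncard_coe_finset, Finset.card_erase_of_mem (by simpa using ht0),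
          Finset.card_range]
  have COUNT2 : ∀ t0 t1 : ℕ, (∀ e ∈ NL ∪ NR, tOf e ≠ t0) → (∀ e ∈ NL ∪ NR, tOf e ≠ t1) →
      t0 < k → t1 < k → t0 ≠ t1 → (NL ∪ NR).ncard ≤ k - 2 := by
    intro t0 t1 hex0 hex1 ht0 ht1 hne
    have himg : tOf '' (NL ∪ NR) ⊆ ↑(((Finset.range k).erase t0).erase t1) := by
      rintro t ⟨e, he, rfl⟩
      simp only [Finset.coe_erase, Set.mem_diff, Finset.coe_range, Set.mem_Iio,
        Set.mem_singleton_iff]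
      refine ⟨⟨?_, hex0 e he⟩, hex1 e he⟩
      rcases he with he | he
      · obtain ⟨a, b, hp, rfl, ht, hk2⟩ := canonL e he; rw [ht]; exact hk2
      · obtain ⟨a, b, hp, rfl, ht, hk2⟩ := canonR e he; rw [ht]; exact hk2
    calc (NL ∪ NR).ncard = (tOf '' (NL ∪ NR)).ncard := (Set.ncard_image_of_injOn hinj).symm
      _ ≤ (↑(((Finset.range k).erase t0).erase t1) : Set ℕ).ncard :=
        Set.ncard_le_ncard himg (Set.toFinite _)
      _ = k - 2 := by
        rw [Set.ncard_coe_finset,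
          Finset.card_erase_of_mem (by simp [Finset.mem_erase]; omega),
          Finset.card_erase_of_mem (by simpa using ht0), Finset.card_range]
        omega
  -- cross edge facts
  have crossNe : ∀ (a b a' b' : Fin n), s(inl a, inr b) ∈ N → s(inl a', inr b') ∈ N →
      s(inl a, inr b) ≠ s(inl a', inr b') → a ≠ a' ∧ b ≠ b' := by
    intro a b a' b' h1 h2 hne
    constructor
    · rintro rfl
      exact hne (pm_unique hM (hNM h1) (hNM h2) (Sym2.mem_mk_left _ _) (Sym2.mem_mk_left _ _))
    · rintro rfl
      exact hne (pm_unique hM (hNM h1) (hNM h2) (Sym2.mem_mk_right _ _) (Sym2.mem_mk_right _ _))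
  have blocked : ∀ (a b a' b' : Fin n), s(inl a, inr b) ∈ N → s(inl a', inr b') ∈ N →
      s(inl a, inr b) ≠ s(inl a', inr b') → pairIdx k a b' ∨ pairIdx k a' b := by
    intro a b a' b' h1 h2 hne
    by_contra hcon
    push_neg at hcon
    exact noswap (inl a) (inr b) (inl a') (inr b') h1 h2 hne
      (adj_lr.mpr (Or.inr hcon.1)) (adj_lr.mpr (Or.inr hcon.2))
  have EXCL : ∀ (a b a' b' : Fin n), s(inl a, inr b) ∈ N → s(inl a', inr b') ∈ N →
      pairIdx k a b' → ∀ e ∈ NL ∪ NR, tOf e ≠ a.val / 2 := by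
    intro a b a' b' h1 h2 hp e he ht
    rcases he with he | he
    · obtain ⟨x, y, hq, rfl, htx, -⟩ := canonL e he
      have hmem : a = x ∨ a = y := by
        apply pairIdx_mem_of_t hq _ (pairIdx_lt hp).1
        omega
      rcases hmem with rfl | rfl
      · have heq := pm_unique hM (hNM he.1) (hNM h1) (Sym2.mem_mk_left _ _) (Sym2.mem_mk_left _ _)
        rw [Sym2.eq_iff] at heq
        rcases heq with ⟨-, hbad⟩ | ⟨hbad, -⟩ <;> exact Sum.inl_ne_inr hbad
      · have heq := pm_unique hM (hNM he.1) (hNM h1) (Sym2.mem_mk_right _ _) (Sym2.mem_mk_left _ _)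
        rw [Sym2.eq_iff] at heq
        rcases heq with ⟨-, hbad⟩ | ⟨hbad, -⟩ <;> exact Sum.inl_ne_inr hbad
    · obtain ⟨x, y, hq, rfl, htx, -⟩ := canonR e he
      have htb : b'.val / 2 = a.val / 2 := (pairIdx_t_lt hp).2
      have hmem : b' = x ∨ b' = y := by
        apply pairIdx_mem_of_t hq _ (pairIdx_lt hp).2
        omega
      rcases hmem with rfl | rfl
      · have heq := pm_unique hM (hNM he.1) (hNM h2) (Sym2.mem_mk_left _ _) (Sym2.mem_mk_right _ _)
        rw [Sym2.eq_iff] at heq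
        rcases heq with ⟨hbad, -⟩ | ⟨-, hbad⟩ <;> exact Sum.inl_ne_inr hbad.symm
      · have heq := pm_unique hM (hNM he.1) (hNM h2) (Sym2.mem_mk_right _ _) (Sym2.mem_mk_right _ _)
        rw [Sym2.eq_iff] at heq
        rcases heq with ⟨hbad, -⟩ | ⟨-, hbad⟩ <;> exact Sum.inl_ne_inr hbad.symm
  -- NC has at most 3 elements
  have hSn : S.ncard ≤ n := by
    have := Set.ncard_le_ncard hS (Set.toFinite _)
    omega
  have hNC3 : NC.ncard ≤ 3 := by
    by_contra hcon
    push_neg at hcon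
    obtain ⟨e1, h1, e2, h2, e3, h3, e4, h4, h12, h13, h14, h23, h24, h34⟩ :=
      four_distinct (Set.toFinite NC) (by omega)
    obtain ⟨h1N, a1, b1, rfl⟩ := h1
    obtain ⟨h2N, a2, b2, rfl⟩ := h2
    obtain ⟨h3N, a3, b3, rfl⟩ := h3
    obtain ⟨h4N, a4, b4, rfl⟩ := h4
    have B12 := blocked a1 b1 a2 b2 h1N h2N h12
    have B13 := blocked a1 b1 a3 b3 h1N h3N h13
    have B14 := blocked a1 b1 a4 b4 h1N h4N h14
    have hb23 := (crossNe a2 b2 a3 b3 h2N h3N h23).2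
    have hb24 := (crossNe a2 b2 a4 b4 h2N h4N h24).2
    have hb34 := (crossNe a3 b3 a4 b4 h3N h4N h34).2
    have ha23 := (crossNe a2 b2 a3 b3 h2N h3N h23).1
    have ha24 := (crossNe a2 b2 a4 b4 h2N h4N h24).1
    have ha34 := (crossNe a3 b3 a4 b4 h3N h4N h34).1
    rcases B12 with h | h <;> rcases B13 with h' | h' <;> rcases B14 with h'' | h''
    · exact hb23 (pairIdx_unique h h')
    · exact hb23 (pairIdx_unique h h')
    · exact hb24 (pairIdx_unique h h'')
    · exact ha34 (pairIdx_left_unique h' h'')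
    · exact hb34 (pairIdx_unique h' h'')
    · exact ha24 (pairIdx_left_unique h h'')
    · exact ha23 (pairIdx_left_unique h h')
    · exact ha23 (pairIdx_left_unique h h')
  -- NC has at least 2 elements
  have hNC2 : 2 ≤ NC.ncard := by omega
  -- main case analysis
  rcases Nat.lt_or_ge NC.ncard 3 with hm | hm
  · -- exactly two cross edges
    have hm2 : NC.ncard = 2 := by omega
    obtain ⟨e1, h1, e2, h2, h12⟩ := Set.one_lt_ncard (Set.toFinite NC) |>.mp (by omega)
    obtain ⟨h1N, a1, b1, rfl⟩ := h1
    obtain ⟨h2N, a2, b2, rfl⟩ := h2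
    rcases blocked a1 b1 a2 b2 h1N h2N h12 with hp | hp
    · have hk1 := (pairIdx_t_lt hp).1
      have := COUNT1 (a1.val / 2) (EXCL a1 b1 a2 b2 h1N h2N hp) hk1
      omega
    · have hk1 := (pairIdx_t_lt hp).1
      have := COUNT1 (a2.val / 2) (EXCL a2 b2 a1 b1 h2N h1N hp) hk1
      omega
  · -- exactly three cross edges
    have hm3 : NC.ncard = 3 := by omega
    obtain ⟨e1, h1, e2, h2, e3, h3, h12, h13, h23⟩ := three_distinct (Set.toFinite NC) (by omega)
    obtain ⟨h1N, a1, b1, rfl⟩ := h1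
    obtain ⟨h2N, a2, b2, rfl⟩ := h2
    obtain ⟨h3N, a3, b3, rfl⟩ := h3
    have hb12 := (crossNe a1 b1 a2 b2 h1N h2N h12).2
    have hb13 := (crossNe a1 b1 a3 b3 h1N h3N h13).2
    have hb23 := (crossNe a2 b2 a3 b3 h2N h3N h23).2
    have ha12 := (crossNe a1 b1 a2 b2 h1N h2N h12).1
    have ha13 := (crossNe a1 b1 a3 b3 h1N h3N h13).1
    have ha23 := (crossNe a2 b2 a3 b3 h2N h3N h23).1
    -- the configuration lemma: a directed triangle of special pairs
    have CONF : ∀ (x1 y1 x2 y2 x3 y3 : Fin n),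
        s(inl x1, inr y1) ∈ N → s(inl x2, inr y2) ∈ N → s(inl x3, inr y3) ∈ N →
        s(inl x1, inr y1) ≠ s(inl x2, inr y2) → s(inl x1, inr y1) ≠ s(inl x3, inr y3) →
        s(inl x2, inr y2) ≠ s(inl x3, inr y3) →
        pairIdx k x1 y2 → pairIdx k x2 y3 → pairIdx k x3 y1 → False := by
      intro x1 y1 x2 y2 x3 y3 g1 g2 g3 g12 g13 g23 P1 P2 P3
      have E1 := EXCL x1 y1 x2 y2 g1 g2 P1
      have E2 := EXCL x2 y2 x3 y3 g2 g3 P2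
      have E3 := EXCL x3 y3 x1 y1 g3 g1 P3
      have hx12 : x1.val ≠ x2.val := fun h => (crossNe x1 y1 x2 y2 g1 g2 g12).1 (Fin.ext h)
      have hx13 : x1.val ≠ x3.val := fun h => (crossNe x1 y1 x3 y3 g1 g3 g13).1 (Fin.ext h)
      have hx23 : x2.val ≠ x3.val := fun h => (crossNe x2 y2 x3 y3 g2 g3 g23).1 (Fin.ext h)
      have hT1 := (pairIdx_t_lt P1).1
      have hT2 := (pairIdx_t_lt P2).1
      have hT3 := (pairIdx_t_lt P3).1
      by_cases hd : x1.val / 2 = x2.val / 2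
      · -- then the third special pair is different from the first
        have hd3 : x3.val / 2 ≠ x1.val / 2 := by
          obtain ⟨tA, htA, hA⟩ := P1
          obtain ⟨tB, htB, hB⟩ := P2
          obtain ⟨tC, htC, hC⟩ := P3
          rcases hA with hA | hA <;> rcases hB with hB | hB <;> rcases hC with hC | hC <;> omega
        have := COUNT2 (x1.val / 2) (x3.val / 2) E1 E3 hT1 hT3 (Ne.symm hd3)
        omega
      · have := COUNT2 (x1.val / 2) (x2.val / 2) E1 E2 hT1 hT2 hd
        omega
    rcases blocked a1 b1 a2 b2 h1N h2N h12 with h | h <;>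
      rcases blocked a1 b1 a3 b3 h1N h3N h13 with h' | h' <;>
      rcases blocked a2 b2 a3 b3 h2N h3N h23 with h'' | h''
    · exact hb23 (pairIdx_unique h h')
    · exact hb23 (pairIdx_unique h h')
    · -- P a1 b2, P a3 b1, P a2 b3 : cycle 1→2→3→1
      exact CONF a1 b1 a2 b2 a3 b3 h1N h2N h3N h12 h13 h23 h h'' h'
    · -- P a1 b2, P a3 b1, P a3 b2 : b1 = b2 contra
      exact hb12 (pairIdx_unique h' h'')
    · -- P a2 b1, P a1 b3, P a2 b3 : b1 = b3 contra
      exact hb13 (pairIdx_unique h h'')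
    · -- P a2 b1, P a1 b3, P a3 b2 : reverse cycle, relabel (1,3,2)
      exact CONF a1 b1 a3 b3 a2 b2 h1N h3N h2N h13 h12 (Ne.symm h23) h' h'' h
    · exact ha23 (pairIdx_left_unique h h')
    · exact ha23 (pairIdx_left_unique h h')

end MinLB2

end AUX

/-- Remark 5.3 together with the definition of `H_k`. -/
theorem stmt14 (n k : ℕ) (hn : 1 ≤ n) (hk : k ≤ (n - 1) / 2) :
    IsPM (Hgraph n k) (M0 n) ∧
    forcingNum (Hgraph n k) (M0 n) = n - 1 ∧
    maxForcing (Hgraph n k) = n - 1 ∧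
    (k = (n - 1) / 2 → minForcing (Hgraph n k) = n / 2) := by
  refine ⟨M0_isPM, forcingNum_M0 hn, maxForcing_H hn, ?_⟩
  rintro rfl
  have hkn : 2*((n-1)/2) < n := by omega
  have hkn2 : n ≤ 2*((n-1)/2)+2 := by omega
  have hlow : ∀ M, IsPM (Hgraph n ((n-1)/2)) M → n/2 ≤ forcingNum (Hgraph n ((n-1)/2)) M := by
    intro M hM
    apply forcingNum_ge hM
    intro S hS hc
    by_contra hcon
    push_neg at hcon
    exact min_lb hkn hkn2 hM hS hc (fun M' h1 h2 => hcon M' h1 h2)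
  have hM1f : forcingNum (Hgraph n ((n-1)/2)) (M1 n ((n-1)/2)) = n/2 := by
    apply le_antisymm
    · have h := forcingNum_le (S1_forcing hkn hkn2)
      rwa [S1_ncard hkn hkn2] at h
    · exact hlow _ (M1_isPM hkn)
  apply le_antisymm
  · exact Nat.sInf_le ⟨M1 n _, M1_isPM hkn, hM1f⟩
  · apply le_csInf
    · exact ⟨n/2, M1 n _, M1_isPM hkn, hM1f⟩
    · rintro c ⟨M, hM, rfl⟩
      exact hlow M hM
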